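/- (Lemma 1, mode 1.) Let Θ ∈ ℝ^{n×k1}, Φ ∈ ℝ^{n×k2}, U_β ∈ ℝ^{n×k_β}, V_β ∈ ℝ^{T×k_β}, U_α ∈ ℝ^{n×k_α}, V_α ∈ ℝ^{T×k_α}, α = U_α V_α^T, and core unfolding M1(S) ∈ ℝ^{k1×(T k2)}. Set d1 = k1 + k_β + 1, U1 = (Θ, U_β, 1_n) ∈ ℝ^{n×d1}, and V1 = ((I_T⊗Φ) M1(S)^T, (I_T⊗1_n) V_β, vec(α)) ∈ ℝ^{(nT)×d1}. Assume: (i) Θ^T Θ = n·I_{k1}, Φ^T Φ = n·I_{k2}, 1_n^T Θ = 0, Θ^T U_β = 0, 1_n^T Φ = 0, Φ^T U_α = 0; (ii) (1/T)·M1(S) M1(S)^T is diagonal with strictly decreasing, strictly positive diagonal entries; (iii) U^svd ∈ ℝ^{n×d1} and V^svd ∈ ℝ^{(nT)×d1} satisfy U1 V1^T = U^svd (V^svd)^T, (U^svd)^T U^svd = n·I_{d1}, and (V^svd)^T V^svd is diagonal with strictly decreasing, strictly positive, pairwise distinct diagonal entries. Then there exist indices 1 ≤ j_1 < j_2 < ...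 < j_{k1} ≤ d1 and signs r_1, ..., r_{k1} ∈ {−1, +1} such that for each l ∈ [k1], the l-th column of Θ equals r_l times the j_l-th column of U^svd, and the l-th column of (I_T⊗Φ) M1(S)^T equals r_l times the j_l-th column of V^svd. -/

import Mathlib

open Matrix Kronecker

/-- The matrix `I_T ⊗ 1_n ∈ ℝ^{(nT) × T}` (identity Kronecker all-ones column). -/
def idKronOnesCol (T n : ℕ) : Matrix (Fin T × Fin n) (Fin T) ℝ :=
  Matrix.reindex (Equiv.refl _) (Equiv.prodPUnit (Fin T))
    ((1 : Matrix (Fin T) (Fin T) ℝ) ⊗ₖ (Matrix.of fun (_ : Fin n) (_ : PUnit.{1}) => (1 : ℝ)))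

/-- Lemma 1, mode 1: under the identifiability conditions, the columns
of `Θ` (resp. of `(I_T ⊗ Φ) M1(S)ᵀ`) are, up to signs, columns of the scaled singular
factor `U^svd` (resp. `V^svd`) of `U1 V1ᵀ`, at a common increasing set of indices. -/
theorem lemma1_mode1 {n T k1 k2 kα kβ : ℕ}
    (Θ : Matrix (Fin n) (Fin k1) ℝ) (Φ : Matrix (Fin n) (Fin k2) ℝ)
    (Uβ : Matrix (Fin n) (Fin kβ) ℝ) (Vβ : Matrix (Fin T) (Fin kβ) ℝ)
    (Uα : Matrix (Fin n) (Fin kα) ℝ) (Vα : Matrix (Fin T) (Fin kα) ℝ)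
    (α : Matrix (Fin n) (Fin T) ℝ) (hα : α = Uα * Vαᵀ)
    (W : Matrix (Fin k1) (Fin T × Fin k2) ℝ)  -- the core unfolding `M1(S)`
    (Usvd : Matrix (Fin n) (Fin (k1 + kβ + 1)) ℝ)
    (Vsvd : Matrix (Fin T × Fin n) (Fin (k1 + kβ + 1)) ℝ)
    -- (i) orthogonality / centering conditions
    (hΘorth : Θᵀ * Θ = (n : ℝ) • (1 : Matrix (Fin k1) (Fin k1) ℝ))
    (hΦorth : Φᵀ * Φ = (n : ℝ) • (1 : Matrix (Fin k2) (Fin k2) ℝ))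
    (hΘc : ∀ a, ∑ i, Θ i a = 0) (hΘUβ : Θᵀ * Uβ = 0)
    (hΦc : ∀ b, ∑ j, Φ j b = 0) (hΦUα : Φᵀ * Uα = 0)
    -- (ii) `(1/T)·M1(S) M1(S)ᵀ` diagonal with strictly decreasing positive diagonal
    (hW : ∃ d : Fin k1 → ℝ, (T : ℝ)⁻¹ • (W * Wᵀ) = Matrix.diagonal d ∧
      StrictAnti d ∧ ∀ i, 0 < d i)
    -- (iii) scaled SVD of `U1 V1ᵀ`
    (hfact :
      Matrix.fromCols
          (Matrix.fromCols Θ Uβ) (Matrix.of fun (_ : Fin n) (_ : PUnit.{1}) => (1 : ℝ)) *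
        (Matrix.fromCols
          (Matrix.fromCols (((1 : Matrix (Fin T) (Fin T) ℝ) ⊗ₖ Φ) * Wᵀ)
            (idKronOnesCol T n * Vβ))
          (Matrix.of fun (p : Fin T × Fin n) (_ : PUnit.{1}) => α p.2 p.1))ᵀ =
        Usvd * Vsvdᵀ)
    (hUsvd : Usvdᵀ * Usvd = (n : ℝ) • (1 : Matrix (Fin (k1 + kβ + 1)) (Fin (k1 + kβ + 1)) ℝ))
    (hVsvd : ∃ e : Fin (k1 + kβ + 1) → ℝ, Vsvdᵀ * Vsvd = Matrix.diagonal e ∧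
      StrictAnti e ∧ ∀ i, 0 < e i) :
    ∃ (jdx : Fin k1 → Fin (k1 + kβ + 1)) (r : Fin k1 → ℝ),
      StrictMono jdx ∧ (∀ l, r l = 1 ∨ r l = -1) ∧
      (∀ l i, Θ i l = r l * Usvd i (jdx l)) ∧
      (∀ l p, ((((1 : Matrix (Fin T) (Fin T) ℝ) ⊗ₖ Φ) * Wᵀ)) p l = r l * Vsvd p (jdx l)) := by
  obtain ⟨d, hd, hdanti, hdpos⟩ := hW
  obtain ⟨e, he, heanti, hepos⟩ := hVsvd
  -- degenerate case `k1 = 0`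
  rcases Nat.eq_zero_or_pos k1 with hk1 | hk1
  · subst hk1
    exact ⟨Fin.elim0, Fin.elim0, fun a => a.elim0, fun l => l.elim0,
      fun l => l.elim0, fun l => l.elim0⟩
  -- degenerate case `n = 0`
  rcases Nat.eq_zero_or_pos n with hn | hn
  · subst hn
    have hle : k1 ≤ k1 + kβ + 1 := by omega
    exact ⟨fun l => Fin.castLE hle l, fun _ => 1, Fin.strictMono_castLE hle,
      fun _ => Or.inl rfl, fun l i => i.elim0, fun l p => p.2.elim0⟩
  -- degenerate case `T = 0` is contradictory
  rcases Nat.eq_zero_or_pos T with hT | hT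
  · exfalso
    subst hT
    have h0 := congrFun (congrFun hd ⟨0, hk1⟩) ⟨0, hk1⟩
    simp [Matrix.diagonal] at h0
    exact absurd h0.symm (ne_of_gt (hdpos _))
  -- main case
  have hn0 : (0:ℝ) < (n:ℝ) := by exact_mod_cast hn
  have hT0 : (0:ℝ) < (T:ℝ) := by exact_mod_cast hT
  set K : Matrix (Fin T × Fin n) (Fin T × Fin k2) ℝ := (1 : Matrix (Fin T) (Fin T) ℝ) ⊗ₖ Φ
    with hK
  set A : Matrix (Fin T × Fin n) (Fin k1) ℝ := K * Wᵀ with hAdef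
  set B : Matrix (Fin T × Fin n) (Fin kβ) ℝ := idKronOnesCol T n * Vβ with hBdef
  set Co : Matrix (Fin T × Fin n) PUnit.{1} ℝ :=
    Matrix.of fun (p : Fin T × Fin n) (_ : PUnit.{1}) => α p.2 p.1 with hCodef
  set On : Matrix (Fin n) PUnit.{1} ℝ := Matrix.of fun (_ : Fin n) (_ : PUnit.{1}) => (1:ℝ)
    with hOndef
  set U1 := Matrix.fromCols (Matrix.fromCols Θ Uβ) On with hU1def
  set V1 := Matrix.fromCols (Matrix.fromCols A B) Co with hV1def
  -- W * Wᵀ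
  have hWW : W * Wᵀ = (T:ℝ) • Matrix.diagonal d := by
    have := congrArg (fun M => (T:ℝ) • M) hd
    simpa [smul_smul, mul_inv_cancel₀ hT0.ne'] using this
  -- transposed zero facts
  have hUβΘ : Uβᵀ * Θ = 0 := by
    have := congrArg Matrix.transpose hΘUβ
    simpa [Matrix.transpose_mul] using this
  have hOnΘ : Onᵀ * Θ = 0 := by
    ext u a
    simpa [Matrix.mul_apply, On] using hΘc a
  -- L1 : U1ᵀ * Θ
  have hL1 : U1ᵀ * Θ = Matrix.fromRows (Matrix.fromRows ((n:ℝ) • 1) 0) 0 := by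
    rw [hU1def, Matrix.transpose_fromCols, Matrix.transpose_fromCols,
      Matrix.fromRows_mul, Matrix.fromRows_mul, hΘorth, hUβΘ, hOnΘ]
  -- Mᵀ Θ = n • A
  have hMTΘ : V1 * (U1ᵀ * Θ) = (n:ℝ) • A := by
    rw [hL1, hV1def, Matrix.fromCols_mul_fromRows, Matrix.fromCols_mul_fromRows,
      Matrix.mul_zero, Matrix.mul_zero, add_zero, add_zero, Matrix.mul_smul, Matrix.mul_one]
  -- Kᵀ * K = n • 1
  have hKK : Kᵀ * K = (n:ℝ) • 1 := by
    rw [hK, ← Matrix.kroneckerMap_transpose, ← Matrix.mul_kronecker_mul,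
      Matrix.transpose_one, Matrix.one_mul, hΦorth, Matrix.kronecker_smul,
      Matrix.one_kronecker_one]
  -- Aᵀ * A
  have hAtA : Aᵀ * A = ((n:ℝ) * T) • Matrix.diagonal d := by
    rw [hAdef, Matrix.transpose_mul, Matrix.transpose_transpose, Matrix.mul_assoc,
      ← Matrix.mul_assoc Kᵀ, hKK, Matrix.smul_mul, Matrix.one_mul, Matrix.mul_smul,
      hWW, smul_smul]
  -- idKronOnesColᵀ * K = 0
  have hIK : (idKronOnesCol T n)ᵀ * K = 0 := by
    rw [hK]
    ext s tb
    obtain ⟨t, b⟩ := tb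
    simp only [Matrix.mul_apply, Matrix.transpose_apply, Matrix.zero_apply,
      Fintype.sum_prod_type, idKronOnesCol, Matrix.reindex_apply, Matrix.submatrix_apply,
      Equiv.refl_symm, Equiv.refl_apply, Matrix.kroneckerMap_apply, Matrix.one_apply,
      Matrix.of_apply, Equiv.prodPUnit_symm_apply]
    simp [mul_ite, ite_mul, Finset.sum_ite_eq, Finset.sum_ite_eq', hΦc, mul_comm]
  -- Bᵀ * A = 0
  have hBtA : Bᵀ * A = 0 := by
    rw [hBdef, hAdef, Matrix.transpose_mul, Matrix.mul_assoc,
      ← Matrix.mul_assoc (idKronOnesCol T n)ᵀ, hIK, Matrix.zero_mul, Matrix.mul_zero]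
  -- Coᵀ * A = 0
  have hΦα : Φᵀ * α = 0 := by
    rw [hα, ← Matrix.mul_assoc, hΦUα, Matrix.zero_mul]
  have hCoK : Coᵀ * K = 0 := by
    rw [hCodef, hK]
    ext u tb
    obtain ⟨t, b⟩ := tb
    have h0 := congrFun (congrFun hΦα b) t
    simp only [Matrix.mul_apply, Matrix.transpose_apply, Matrix.zero_apply] at h0 ⊢
    rw [Fintype.sum_prod_type]
    simp only [Matrix.kroneckerMap_apply, Matrix.one_apply, Matrix.of_apply]
    simp only [mul_ite, ite_mul, one_mul, zero_mul, mul_zero, mul_one,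
      Finset.sum_ite_eq, Finset.sum_ite_eq', Finset.mem_univ, if_true]
    simpa [mul_comm] using h0
  have hCtA : Coᵀ * A = 0 := by
    rw [hAdef, ← Matrix.mul_assoc, hCoK, Matrix.zero_mul]
  -- L2 : V1ᵀ * A
  have hL2 : V1ᵀ * A = Matrix.fromRows (Matrix.fromRows (((n:ℝ) * T) • Matrix.diagonal d) 0) 0 := by
    rw [hV1def, Matrix.transpose_fromCols, Matrix.transpose_fromCols,
      Matrix.fromRows_mul, Matrix.fromRows_mul, hAtA, hBtA, hCtA]
  have hMA : U1 * (V1ᵀ * A) = ((n:ℝ) * T) • (Θ * Matrix.diagonal d) := by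
    rw [hL2, hU1def, Matrix.fromCols_mul_fromRows, Matrix.fromCols_mul_fromRows,
      Matrix.mul_zero, Matrix.mul_zero, add_zero, add_zero, Matrix.mul_smul]
  -- SVD side
  set Cm : Matrix (Fin (k1 + kβ + 1)) (Fin k1) ℝ := Usvdᵀ * Θ with hCm
  have hfact' : U1 * V1ᵀ = Usvd * Vsvdᵀ := hfact
  have hEq1 : Vsvd * Cm = (n:ℝ) • A := by
    have h := congrArg Matrix.transpose hfact'
    rw [Matrix.transpose_mul, Matrix.transpose_mul, Matrix.transpose_transpose,
      Matrix.transpose_transpose] at h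
    calc Vsvd * Cm = (Vsvd * Usvdᵀ) * Θ := by rw [hCm, Matrix.mul_assoc]
      _ = (V1 * U1ᵀ) * Θ := by rw [h]
      _ = V1 * (U1ᵀ * Θ) := by rw [Matrix.mul_assoc]
      _ = (n:ℝ) • A := hMTΘ
  have hEq2 : Usvd * (Matrix.diagonal e * Cm)
      = ((n:ℝ) * ((n:ℝ) * T)) • (Θ * Matrix.diagonal d) := by
    calc Usvd * (Matrix.diagonal e * Cm) = Usvd * (Vsvdᵀ * Vsvd * Cm) := by rw [he]
      _ = (Usvd * Vsvdᵀ) * (Vsvd * Cm) := by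
          rw [Matrix.mul_assoc, Matrix.mul_assoc]
      _ = (U1 * V1ᵀ) * ((n:ℝ) • A) := by rw [hfact', hEq1]
      _ = (n:ℝ) • (U1 * (V1ᵀ * A)) := by rw [Matrix.mul_smul, Matrix.mul_assoc]
      _ = _ := by rw [hMA, smul_smul]
  -- cell identity : e j * Cm j l = (n*T*d l) * Cm j l
  have hcell : ∀ j l, e j * Cm j l = ((n:ℝ) * T * d l) * Cm j l := by
    intro j l
    have h := congrArg (fun M => Usvdᵀ * M) hEq2
    rw [← Matrix.mul_assoc, hUsvd, Matrix.smul_mul, Matrix.one_mul, Matrix.mul_smul,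
      ← Matrix.mul_assoc Usvdᵀ Θ (Matrix.diagonal d), ← hCm] at h
    have h2 := congrFun (congrFun h j) l
    simp only [Matrix.smul_apply, Matrix.diagonal_mul, Matrix.mul_diagonal,
      smul_eq_mul] at h2
    have h3 : (n:ℝ) * (e j * Cm j l) = (n:ℝ) * (((n:ℝ) * T * d l) * Cm j l) := by
      linear_combination h2
    exact mul_left_cancel₀ hn0.ne' h3
  have hU2 : ∀ j, ∑ i, Usvd i j * Usvd i j = (n:ℝ) := by
    intro j
    have := congrFun (congrFun hUsvd j) j
    simpa [Matrix.mul_apply, Matrix.one_apply] using this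
  have hΘ2 : ∀ l, ∑ i, Θ i l * Θ i l = (n:ℝ) := by
    intro l
    have := congrFun (congrFun hΘorth l) l
    simpa [Matrix.mul_apply, Matrix.one_apply] using this
  -- each column of Cm is nonzero
  have hcne : ∀ l, ∃ j, Cm j l ≠ 0 := by
    intro l
    by_contra hc
    push_neg at hc
    have hΘ0 : ∀ i, Θ i l = 0 := by
      intro i
      have h2 := congrFun (congrFun hEq2 i) l
      simp only [Matrix.smul_apply, Matrix.mul_diagonal, smul_eq_mul] at h2
      rw [Matrix.mul_apply] at h2
      simp only [Matrix.diagonal_mul, hc, mul_zero, Finset.sum_const_zero] at h2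
      have hpos : (0:ℝ) < (n:ℝ) * ((n:ℝ) * T) * d l :=
        mul_pos (mul_pos hn0 (mul_pos hn0 hT0)) (hdpos l)
      have h4 : Θ i l * ((n:ℝ) * ((n:ℝ) * T) * d l) = 0 := by linear_combination -h2
      exact (mul_eq_zero.mp h4).resolve_right hpos.ne'
    have h5 := hΘ2 l
    simp only [hΘ0, zero_mul, Finset.sum_const_zero] at h5
    exact hn0.ne' h5.symm
  choose jf hjf using hcne
  -- e (jf l) = n*T*d l
  have hejf : ∀ l, e (jf l) = (n:ℝ) * T * d l :=
    fun l => mul_right_cancel₀ (hjf l) (hcell (jf l) l)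
  -- off-support entries vanish
  have huniq : ∀ l j, j ≠ jf l → Cm j l = 0 := by
    intro l j hj
    by_contra h
    have he1 : e j = (n:ℝ) * T * d l := mul_right_cancel₀ h (hcell j l)
    exact hj (heanti.injective (he1.trans (hejf l).symm))
  -- strict monotonicity
  have hmono : StrictMono jf := by
    intro a b hab
    have hlt : e (jf b) < e (jf a) := by
      rw [hejf, hejf]
      exact mul_lt_mul_of_pos_left (hdanti hab) (mul_pos hn0 hT0)
    exact (heanti.lt_iff_gt).mp hlt
  -- collapse sums against column l of Cm
  have hcol : ∀ l (f : Fin (k1 + kβ + 1) → ℝ),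
      (∑ j, f j * Cm j l) = f (jf l) * Cm (jf l) l := by
    intro l f
    rw [Finset.sum_eq_single (jf l)]
    · intro j _ hj; rw [huniq l j hj, mul_zero]
    · intro h; exact absurd (Finset.mem_univ _) h
  -- Θ in terms of Usvd
  have hΘeq : ∀ l i, (n:ℝ) * Θ i l = Cm (jf l) l * Usvd i (jf l) := by
    intro l i
    have h2 := congrFun (congrFun hEq2 i) l
    simp only [Matrix.smul_apply, Matrix.mul_diagonal, smul_eq_mul] at h2
    rw [Matrix.mul_apply] at h2
    simp only [Matrix.diagonal_mul] at h2
    have hs : ∑ j, Usvd i j * (e j * Cm j l)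
        = Usvd i (jf l) * (e (jf l) * Cm (jf l) l) := by
      have h6 := hcol l (fun j => Usvd i j * e j)
      simpa [mul_assoc] using h6
    rw [hs, hejf] at h2
    have hnTd : ((n:ℝ) * T * d l) ≠ 0 :=
      (mul_pos (mul_pos hn0 hT0) (hdpos l)).ne'
    have h7 : ((n:ℝ) * T * d l) * ((n:ℝ) * Θ i l)
        = ((n:ℝ) * T * d l) * (Cm (jf l) l * Usvd i (jf l)) := by
      linear_combination -h2
    exact mul_left_cancel₀ hnTd h7
  have hΘcol : ∀ l i, Θ i l = (Cm (jf l) l / n) * Usvd i (jf l) := by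
    intro l i
    rw [div_mul_eq_mul_div, eq_div_iff hn0.ne']
    linear_combination hΘeq l i
  refine ⟨jf, fun l => Cm (jf l) l / n, hmono, ?_, ?_, ?_⟩
  · -- r l = ±1
    intro l
    have h2 : (n:ℝ) = (Cm (jf l) l / n) * (Cm (jf l) l / n) * (n:ℝ) := by
      calc (n:ℝ) = ∑ i, Θ i l * Θ i l := (hΘ2 l).symm
        _ = ∑ i, (Cm (jf l) l / n) * (Cm (jf l) l / n) * (Usvd i (jf l) * Usvd i (jf l)) := by
            refine Finset.sum_congr rfl fun i _ => ?_
            rw [hΘcol l i]; ring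
        _ = (Cm (jf l) l / n) * (Cm (jf l) l / n) * ∑ i, Usvd i (jf l) * Usvd i (jf l) := by
            rw [Finset.mul_sum]
        _ = _ := by rw [hU2]
    have h3 : (Cm (jf l) l / n) * (Cm (jf l) l / n) * (n:ℝ) = 1 * (n:ℝ) := by
      linarith
    exact mul_self_eq_one_iff.mp (mul_right_cancel₀ hn0.ne' h3)
  · -- Θ columns
    exact hΘcol
  · -- A columns
    intro l p
    have h1 := congrFun (congrFun hEq1 p) l
    simp only [Matrix.smul_apply, smul_eq_mul] at h1
    rw [Matrix.mul_apply, hcol l (fun j => Vsvd p j)] at h1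
    show A p l = Cm (jf l) l / n * Vsvd p (jf l)
    rw [div_mul_eq_mul_div, eq_div_iff hn0.ne']
    linear_combination -h1
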